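/- arXiv:1610.04809 — 5 statements merged into one kernel-verified Lean document; each statement's English description precedes it below -/
import Mathlib

section
/- Let γ > 2, and let φ be nonnegative, increasing, differentiable, and concave on [0,∞). Define for x_t ≥ x₀ > 0 and a fixed constant K > 0: F(x_t) = φ(K·x_t/√(I(x_t)))·x_t^{1-γ}/(γ-1) + λ·K·√(I(x_t)) where I(x_t) = ∫_{x_t}^∞ x^{1-γ} dx = x_t^{2-γ}/(γ-2) and λ > 0. Then F'(x_t) ≤ 0 for all x_t ≥ x₀. -/
open Set

theorem stmt_8 (γ lam K x₀ : ℝ) (φ : ℝ → ℝ)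
    (hγ : 2 < γ) (hlam : 0 < lam) (hK : 0 < K) (hx₀ : 0 < x₀)
    (hφ0 : ∀ x ∈ Ici (0 : ℝ), 0 ≤ φ x)
    (hmono : MonotoneOn φ (Ici 0))
    (hdiff : Differentiable ℝ φ)
    (hconc : ConcaveOn ℝ (Ici 0) φ) :
    ∀ xt : ℝ, x₀ ≤ xt →
      deriv (fun x : ℝ =>
        φ (K * x / Real.sqrt (x ^ (2 - γ) / (γ - 2))) * x ^ (1 - γ) / (γ - 1) +
          lam * K * Real.sqrt (x ^ (2 - γ) / (γ - 2))) xt ≤ 0 := by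
  intro xt hxt
  have hx : 0 < xt := lt_of_lt_of_le hx₀ hxt
  have hγ2 : (0:ℝ) < γ - 2 := by linarith
  have hs : 0 < Real.sqrt (γ - 2) := Real.sqrt_pos.2 hγ2
  set s := Real.sqrt (γ - 2) with hsdef
  set c := K * s with hcdef
  have hcpos : 0 < c := mul_pos hK hs
  -- Step 1: the function agrees near xt with a simpler one
  have hev : (fun x : ℝ =>
        φ (K * x / Real.sqrt (x ^ (2 - γ) / (γ - 2))) * x ^ (1 - γ) / (γ - 1) +
          lam * K * Real.sqrt (x ^ (2 - γ) / (γ - 2)))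
      =ᶠ[nhds xt] (fun x : ℝ =>
        φ (c * x ^ (γ / 2)) * x ^ (1 - γ) / (γ - 1) + (lam * K / s) * x ^ (1 - γ / 2)) := by
    filter_upwards [eventually_gt_nhds hx] with x hxp
    have hxp' : (0:ℝ) ≤ x := hxp.le
    have hsq : Real.sqrt (x ^ (2 - γ) / (γ - 2)) = x ^ (1 - γ / 2) / s := by
      rw [Real.sqrt_div (Real.rpow_nonneg hxp' _), hsdef]
      congr 1
      rw [Real.sqrt_eq_rpow, ← Real.rpow_mul hxp']
      congr 1
      ring
    have hxe : x ^ (1 - γ / 2) ≠ 0 := (Real.rpow_pos_of_pos hxp _).ne'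
    have hxprod : x ^ (γ / 2) * x ^ (1 - γ / 2) = x := by
      rw [← Real.rpow_add hxp]
      norm_num
    have harg : K * x / (x ^ (1 - γ / 2) / s) = c * x ^ (γ / 2) := by
      rw [div_div_eq_mul_div, div_eq_iff hxe, hcdef]
      linear_combination (-(K * s)) * hxprod
    rw [hsq, harg]
    ring
  rw [hev.deriv_eq]
  -- Step 2: compute the derivative
  have h1 : HasDerivAt (fun x : ℝ => x ^ (γ / 2)) (γ / 2 * xt ^ (γ / 2 - 1)) xt :=
    Real.hasDerivAt_rpow_const (Or.inl hx.ne')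
  have hu : HasDerivAt (fun x : ℝ => c * x ^ (γ / 2)) (c * (γ / 2 * xt ^ (γ / 2 - 1))) xt :=
    h1.const_mul c
  set u := c * xt ^ (γ / 2) with hudef
  have hupos : 0 < u := mul_pos hcpos (Real.rpow_pos_of_pos hx _)
  have hφu : HasDerivAt (fun x : ℝ => φ (c * x ^ (γ / 2)))
      (deriv φ u * (c * (γ / 2 * xt ^ (γ / 2 - 1)))) xt :=
    ((hdiff u).hasDerivAt).comp xt hu
  have h2 : HasDerivAt (fun x : ℝ => x ^ (1 - γ)) ((1 - γ) * xt ^ (1 - γ - 1)) xt :=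
    Real.hasDerivAt_rpow_const (Or.inl hx.ne')
  have h4 : HasDerivAt (fun x : ℝ => x ^ (1 - γ / 2)) ((1 - γ / 2) * xt ^ (1 - γ / 2 - 1)) xt :=
    Real.hasDerivAt_rpow_const (Or.inl hx.ne')
  have hD := ((hφu.mul h2).div_const (γ - 1)).add (h4.const_mul (lam * K / s))
  have hD' : HasDerivAt (fun x : ℝ => φ (c * x ^ (γ / 2)) * x ^ (1 - γ) / (γ - 1) + lam * K / s * x ^ (1 - γ / 2)) _ xt := hD
  rw [hD'.deriv]
  -- Step 3: bound the derivative
  have hslope : deriv φ u ≤ slope φ 0 u :=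
    hconc.deriv_le_slope (self_mem_Ici) (mem_Ici.2 hupos.le) hupos (hdiff u)
  have hkey : deriv φ u * u ≤ φ u := by
    have h0 : 0 ≤ φ 0 := hφ0 0 self_mem_Ici
    have hsl : slope φ 0 u = (φ u - φ 0) / u := by
      rw [slope_def_field, sub_zero]
    rw [hsl] at hslope
    have h1 : deriv φ u * u ≤ (φ u - φ 0) / u * u :=
      mul_le_mul_of_nonneg_right hslope hupos.le
    rw [div_mul_cancel₀ _ hupos.ne'] at h1
    linarith
  have hφupos : 0 ≤ φ u := hφ0 u hupos.le
  have e1 : xt ^ (γ / 2 - 1) * xt ^ (1 - γ) = xt ^ (γ / 2) * xt ^ (-γ) := by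
    rw [← Real.rpow_add hx, ← Real.rpow_add hx]
    congr 1; ring
  have e2 : xt ^ (1 - γ - 1) = xt ^ (-γ) := by congr 1; ring
  have hP : 0 < xt ^ (-γ) := Real.rpow_pos_of_pos hx _
  have hQ : 0 < xt ^ (1 - γ / 2 - 1) := Real.rpow_pos_of_pos hx _
  have eA : deriv φ u * (c * (γ / 2 * xt ^ (γ / 2 - 1))) * xt ^ (1 - γ)
      = (deriv φ u * u) * (γ / 2) * xt ^ (-γ) := by
    rw [hudef]
    linear_combination (deriv φ u * c * (γ / 2)) * e1
  rw [eA, e2]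
  have hnum : (deriv φ u * u) * (γ / 2) * xt ^ (-γ) + φ u * ((1 - γ) * xt ^ (-γ))
      ≤ φ u * (1 - γ / 2) * xt ^ (-γ) := by
    nlinarith [mul_le_mul_of_nonneg_right hkey hP.le]
  have hnum2 : φ u * (1 - γ / 2) * xt ^ (-γ) ≤ 0 := by
    have h : φ u * (1 - γ / 2) * xt ^ (-γ) = (1 - γ / 2) * (φ u * xt ^ (-γ)) := by ring
    rw [h]
    exact mul_nonpos_iff.mpr (Or.inr ⟨by linarith, by positivity⟩)
  have hterm2 : lam * K / s * ((1 - γ / 2) * xt ^ (1 - γ / 2 - 1)) ≤ 0 := by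
    have h : lam * K / s * ((1 - γ / 2) * xt ^ (1 - γ / 2 - 1))
        = (1 - γ / 2) * (lam * K / s * xt ^ (1 - γ / 2 - 1)) := by ring
    rw [h]
    exact mul_nonpos_iff.mpr (Or.inr ⟨by linarith, by positivity⟩)
  have h5 : ((deriv φ u * u) * (γ / 2) * xt ^ (-γ) + φ u * ((1 - γ) * xt ^ (-γ))) / (γ - 1) ≤ 0 :=
    div_nonpos_of_nonpos_of_nonneg (hnum.trans hnum2) (by linarith)
  linarith
end

section
/- Let γ > 2 and φ nonnegative, increasing, differentiable, concave on [0,∞) with x·φ'(x) ≤ φ(x) for x ≥ 0. For constants K, λ > 0, define S(x_t) = ∫_{x_t}^∞ φ(K·x/√(I(x_t)))·x^{-γ} dx + λK·√(I(x_t)), where I(x_t) = x_t^{2-γ}/(γ-2). Then S'(x_t) ≤ 0 for all x_t ≥ x₀ > 0; in particular the social welfare is maximized by setting the consumer cutoff equal to x₀. -/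
open MeasureTheory Set

lemma phi_lin {φ : ℝ → ℝ} (hφ0 : ∀ x ∈ Ici (0:ℝ), 0 ≤ φ x)
    (hconc : ConcaveOn ℝ (Ici 0) φ) {a t : ℝ} (ha : 0 ≤ a) (ht : 1 ≤ t) :
    φ (t * a) ≤ t * φ a := by
  have ht0 : 0 < t := lt_of_lt_of_le one_pos ht
  have hkey := hconc.2 (show (0:ℝ) ∈ Ici 0 from mem_Ici.2 le_rfl)
    (show t * a ∈ Ici 0 from mem_Ici.2 (mul_nonneg ht0.le ha))
    (show (0:ℝ) ≤ 1 - 1/t by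
      have : 1/t ≤ 1 := by rw [div_le_one ht0]; exact ht
      linarith)
    (show (0:ℝ) ≤ 1/t by positivity)
    (by field_simp; ring)
  simp only [smul_eq_mul, mul_zero, zero_add] at hkey
  have h0 : 0 ≤ φ 0 := hφ0 0 (mem_Ici.2 le_rfl)
  have h1 : 0 ≤ 1 - 1/t := by
    have : 1/t ≤ 1 := by rw [div_le_one ht0]; exact ht
    linarith
  have h2 : (1/t) * φ (t*a) ≤ φ ((1/t) * (t*a)) := by nlinarith
  rw [show (1/t) * (t*a) = a by field_simp] at h2
  calc φ (t*a) = t * ((1/t) * φ (t*a)) := by field_simp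
  _ ≤ t * φ a := by nlinarith

lemma g_contOn {γ : ℝ} {φ : ℝ → ℝ} (hdiff : Differentiable ℝ φ) :
    ContinuousOn (fun v : ℝ => φ v * v ^ (-γ)) (Ioi 0) := by
  apply ContinuousOn.mul (hdiff.continuous.continuousOn)
  intro x hx
  exact (Real.continuousAt_rpow_const x (-γ) (Or.inl (ne_of_gt hx))).continuousWithinAt

lemma g_int {γ : ℝ} {φ : ℝ → ℝ} (hγ : 2 < γ)
    (hφ0 : ∀ x ∈ Ici (0:ℝ), 0 ≤ φ x)
    (hmono : MonotoneOn φ (Ici 0))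
    (hdiff : Differentiable ℝ φ)
    (hconc : ConcaveOn ℝ (Ici 0) φ)
    {m : ℝ} (hm : 0 < m) :
    IntegrableOn (fun v : ℝ => φ v * v ^ (-γ)) (Ioi m) := by
  have hmeas : AEStronglyMeasurable (fun v : ℝ => φ v * v ^ (-γ)) (volume.restrict (Ioi m)) :=
    ((g_contOn hdiff (γ := γ)).mono (Ioi_subset_Ioi hm.le)).aestronglyMeasurable measurableSet_Ioi
  have hint1 : IntegrableOn (fun v : ℝ => v ^ (-γ)) (Ioi m) :=
    integrableOn_Ioi_rpow_of_lt (by linarith) hm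
  have hint2 : IntegrableOn (fun v : ℝ => v ^ (1-γ)) (Ioi m) :=
    integrableOn_Ioi_rpow_of_lt (by linarith) hm
  have hdom : IntegrableOn (fun v : ℝ => φ 1 * v ^ (-γ) + φ 1 * v ^ (1-γ)) (Ioi m) :=
    (hint1.const_mul _).add (hint2.const_mul _)
  refine hdom.mono' hmeas ?_
  filter_upwards [ae_restrict_mem measurableSet_Ioi] with v (hv : m < v)
  have hv0 : 0 < v := hm.trans hv
  have hφv : 0 ≤ φ v := hφ0 v (mem_Ici.2 hv0.le)
  have hφ1 : 0 ≤ φ 1 := hφ0 1 (mem_Ici.2 zero_le_one)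
  have hbound : φ v ≤ φ 1 + φ 1 * v := by
    rcases le_total v 1 with h | h
    · have := hmono (mem_Ici.2 hv0.le) (mem_Ici.2 zero_le_one) h
      nlinarith
    · have := phi_lin hφ0 hconc (a := 1) (t := v) zero_le_one h
      rw [mul_one] at this
      nlinarith
  rw [Real.norm_eq_abs, abs_of_nonneg (mul_nonneg hφv (Real.rpow_nonneg hv0.le _))]
  have hsplit : v ^ (1-γ) = v * v ^ (-γ) := by
    rw [show (1-γ) = 1 + (-γ) by ring, Real.rpow_add hv0, Real.rpow_one]
  have hvpow : 0 ≤ v ^ (-γ) := Real.rpow_nonneg hv0.le _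
  rw [hsplit]
  nlinarith

lemma Phi_hasDeriv {γ : ℝ} {φ : ℝ → ℝ} (hγ : 2 < γ)
    (hφ0 : ∀ x ∈ Ici (0:ℝ), 0 ≤ φ x)
    (hmono : MonotoneOn φ (Ici 0))
    (hdiff : Differentiable ℝ φ)
    (hconc : ConcaveOn ℝ (Ici 0) φ)
    {m : ℝ} (hm : 0 < m) :
    HasDerivAt (fun u : ℝ => ∫ v in Ioi u, φ v * v ^ (-γ))
      (-(φ m * m ^ (-γ))) m := by
  set g : ℝ → ℝ := fun v => φ v * v ^ (-γ) with hg
  set m₀ : ℝ := m/2 with hm₀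
  have hm₀0 : 0 < m₀ := by positivity
  have hm₀m : m₀ < m := by rw [hm₀]; linarith
  have hint : IntegrableOn g (Ioi m₀) := g_int hγ hφ0 hmono hdiff hconc hm₀0
  have key : ∀ y ∈ Ioi m₀, (∫ v in Ioi y, g v)
      = (∫ v in Ioi m₀, g v) - ∫ v in m₀..y, g v := by
    intro y hy
    have hy' : m₀ < y := hy
    have hsplit : (∫ v in Ioc m₀ y, g v) + (∫ v in Ioi y, g v) = ∫ v in Ioi m₀, g v := by
      rw [← setIntegral_union (Ioc_disjoint_Ioi le_rfl) measurableSet_Ioi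
        (hint.mono_set Ioc_subset_Ioi_self) (hint.mono_set (Ioi_subset_Ioi hy'.le)),
        Ioc_union_Ioi_eq_Ioi hy'.le]
    rw [intervalIntegral.integral_of_le hy'.le]
    linarith
  have hii : IntervalIntegrable g volume m₀ m := by
    rw [intervalIntegrable_iff, uIoc_of_le hm₀m.le]
    exact hint.mono_set Ioc_subset_Ioi_self
  have hFTC : HasDerivAt (fun u => ∫ v in m₀..u, g v) (g m) m :=
    intervalIntegral.integral_hasDerivAt_right hii
      ((g_contOn hdiff).stronglyMeasurableAtFilter isOpen_Ioi m hm)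
      ((g_contOn hdiff).continuousAt (isOpen_Ioi.mem_nhds hm))
  have hD : HasDerivAt (fun y => (∫ v in Ioi m₀, g v) - ∫ v in m₀..y, g v) (-(g m)) m := by
    have := (hasDerivAt_const m (∫ v in Ioi m₀, g v)).sub hFTC
    rw [zero_sub] at this
    exact this
  exact hD.congr_of_eventuallyEq
    (Filter.eventuallyEq_of_mem (isOpen_Ioi.mem_nhds hm₀m) key)

lemma Phi_le {γ : ℝ} {φ : ℝ → ℝ} (hγ : 2 < γ)
    (hφ0 : ∀ x ∈ Ici (0:ℝ), 0 ≤ φ x)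
    (hmono : MonotoneOn φ (Ici 0))
    (hdiff : Differentiable ℝ φ)
    (hconc : ConcaveOn ℝ (Ici 0) φ)
    {m : ℝ} (hm : 0 < m) :
    (∫ v in Ioi m, φ v * v ^ (-γ)) ≤ φ m * m ^ (1-γ) / (γ - 2) := by
  have hint2 : IntegrableOn (fun v : ℝ => (φ m / m) * v ^ (1-γ)) (Ioi m) :=
    (integrableOn_Ioi_rpow_of_lt (by linarith) hm).const_mul _
  have hφm : 0 ≤ φ m := hφ0 m (mem_Ici.2 hm.le)
  have hstep : (∫ v in Ioi m, φ v * v ^ (-γ))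
      ≤ ∫ v in Ioi m, (φ m / m) * v ^ (1-γ) := by
    refine setIntegral_mono_on (g_int hγ hφ0 hmono hdiff hconc hm) hint2
      measurableSet_Ioi ?_
    intro v hv
    have hv' : m < v := hv
    have hv0 : 0 < v := hm.trans hv'
    have ht : 1 ≤ v / m := (one_le_div hm).2 hv'.le
    have hφv : φ v ≤ (v / m) * φ m := by
      have := phi_lin hφ0 hconc (a := m) (t := v / m) hm.le ht
      rwa [div_mul_cancel₀ _ hm.ne'] at this
    have hsplit : v ^ (1-γ) = v * v ^ (-γ) := by
      rw [show (1-γ) = 1 + (-γ) by ring, Real.rpow_add hv0, Real.rpow_one]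
    have hvpow : 0 ≤ v ^ (-γ) := Real.rpow_nonneg hv0.le _
    rw [hsplit]
    calc φ v * v ^ (-γ) ≤ ((v / m) * φ m) * v ^ (-γ) := by nlinarith
    _ = φ m / m * (v * v ^ (-γ)) := by ring
  have hval : (∫ v in Ioi m, (φ m / m) * v ^ (1-γ))
      = φ m * m ^ (1-γ) / (γ - 2) := by
    rw [integral_const_mul, integral_Ioi_rpow_of_lt (by linarith) hm]
    have hmm : m ^ (1 - γ + 1) = m * m ^ (1-γ) := by
      rw [show (1-γ+1 : ℝ) = 1 + (1-γ) by ring, Real.rpow_add hm, Real.rpow_one]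
    rw [hmm]
    have h1 : (1 - γ + 1) ≠ 0 := ne_of_lt (by linarith)
    have h2 : (γ - 2) ≠ 0 := ne_of_gt (by linarith)
    field_simp
    ring
  linarith [hstep, hval.le, hval.ge]

theorem stmt_9 (γ lam K x₀ : ℝ) (φ : ℝ → ℝ)
    (hγ : 2 < γ) (hlam : 0 < lam) (hK : 0 < K) (hx₀ : 0 < x₀)
    (hφ0 : ∀ x ∈ Ici (0 : ℝ), 0 ≤ φ x)
    (hmono : MonotoneOn φ (Ici 0))
    (hdiff : Differentiable ℝ φ)
    (hconc : ConcaveOn ℝ (Ici 0) φ)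
    (hsub : ∀ x : ℝ, 0 ≤ x → x * deriv φ x ≤ φ x) :
    ∀ xt : ℝ, x₀ ≤ xt →
      deriv (fun x_t : ℝ =>
        (∫ x in Ioi x_t,
          φ (K * x / Real.sqrt (x_t ^ (2 - γ) / (γ - 2))) * x ^ (-γ)) +
          lam * K * Real.sqrt (x_t ^ (2 - γ) / (γ - 2))) xt ≤ 0 := by
  intro xt hxt
  have hxt0 : 0 < xt := lt_of_lt_of_le hx₀ hxt
  have hγ2 : (0:ℝ) < γ - 2 := by linarith
  have hsq : 0 < Real.sqrt (γ - 2) := Real.sqrt_pos.2 hγ2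
  set c : ℝ := K * Real.sqrt (γ - 2) with hcdef
  have hc : 0 < c := mul_pos hK hsq
  set Φ : ℝ → ℝ := fun u : ℝ => ∫ v in Ioi u, φ v * v ^ (-γ) with hΦdef
  set T : ℝ → ℝ := fun t => c ^ (γ-1) * (t ^ ((γ-2)*(γ-1)/2) * Φ (c * t ^ (γ/2)))
      + (lam * K / Real.sqrt (γ - 2)) * t ^ ((2-γ)/2) with hTdef
  -- Part A : the function agrees with T on Ioi 0
  have hAll : ∀ t ∈ Ioi (0:ℝ),
      ((∫ x in Ioi t, φ (K * x / Real.sqrt (t ^ (2 - γ) / (γ - 2))) * x ^ (-γ)) +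
        lam * K * Real.sqrt (t ^ (2 - γ) / (γ - 2))) = T t := by
    intro t ht
    have ht0 : 0 < t := ht
    have hsqrt : Real.sqrt (t ^ (2 - γ) / (γ - 2)) = t ^ ((2-γ)/2) / Real.sqrt (γ - 2) := by
      rw [Real.sqrt_div (Real.rpow_nonneg ht0.le _)]
      congr 1
      have h1 : t ^ (2 - γ) = (t ^ ((2-γ)/2)) ^ (2:ℕ) := by
        rw [← Real.rpow_natCast (t ^ ((2-γ)/2)) 2, ← Real.rpow_mul ht0.le]
        norm_num
      rw [h1, Real.sqrt_sq (Real.rpow_nonneg ht0.le _)]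
    set b : ℝ := c * t ^ ((γ-2)/2) with hbdef
    have hb : 0 < b := mul_pos hc (Real.rpow_pos_of_pos ht0 _)
    have hqq : t ^ ((2-γ)/2) = (t ^ ((γ-2)/2))⁻¹ := by
      rw [show ((2-γ)/2 : ℝ) = -((γ-2)/2) by ring, Real.rpow_neg ht0.le]
    have htp : 0 < t ^ ((γ-2)/2) := Real.rpow_pos_of_pos ht0 _
    have harg : ∀ x : ℝ, K * x / (t ^ ((2-γ)/2) / Real.sqrt (γ - 2)) = b * x := by
      intro x
      rw [hqq, hbdef, hcdef]
      field_simp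
    have hbt : b * t = c * t ^ (γ/2) := by
      rw [hbdef, mul_assoc]
      congr 1
      nth_rewrite 2 [show t = t ^ (1:ℝ) from (Real.rpow_one t).symm]
      rw [← Real.rpow_add ht0]
      congr 1
      ring
    have hbpow : b ^ γ * b⁻¹ = c ^ (γ-1) * t ^ ((γ-2)*(γ-1)/2) := by
      rw [show b⁻¹ = b ^ (-1:ℝ) from (Real.rpow_neg_one b).symm, ← Real.rpow_add hb,
        show γ + (-1) = γ - 1 by ring, hbdef,
        Real.mul_rpow hc.le (Real.rpow_pos_of_pos ht0 _).le, ← Real.rpow_mul ht0.le]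
      congr 2
      ring
    have hbb : b ^ γ * b ^ (-γ) = 1 := by
      rw [← Real.rpow_add hb]; norm_num
    calc (∫ x in Ioi t, φ (K * x / Real.sqrt (t ^ (2 - γ) / (γ - 2))) * x ^ (-γ)) +
          lam * K * Real.sqrt (t ^ (2 - γ) / (γ - 2))
        = (∫ x in Ioi t, b ^ γ * (φ (b * x) * (b*x) ^ (-γ))) +
          lam * K * (t ^ ((2-γ)/2) / Real.sqrt (γ - 2)) := by
          rw [hsqrt]
          congr 1
          refine setIntegral_congr_fun measurableSet_Ioi (fun x hx => ?_)
          have hx0 : 0 < x := ht0.trans hx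
          rw [harg x, Real.mul_rpow hb.le hx0.le]
          calc φ (b*x) * x ^ (-γ)
              = (b ^ γ * b ^ (-γ)) * (φ (b*x) * x ^ (-γ)) := by rw [hbb]; ring
            _ = b ^ γ * (φ (b*x) * (b ^ (-γ) * x ^ (-γ))) := by ring
      _ = b ^ γ * (b⁻¹ * Φ (b * t)) +
          lam * K * (t ^ ((2-γ)/2) / Real.sqrt (γ - 2)) := by
          rw [integral_const_mul]
          congr 2
          have := integral_comp_mul_left_Ioi (fun v : ℝ => φ v * v ^ (-γ)) t hb
          simpa [smul_eq_mul] using this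
      _ = T t := by
          rw [hTdef, ← mul_assoc, hbpow, hbt]
          ring
  -- Part B : derivative of T
  have hm : 0 < c * xt ^ (γ/2) := mul_pos hc (Real.rpow_pos_of_pos hxt0 _)
  have h1 : HasDerivAt (fun s:ℝ => s ^ ((γ-2)*(γ-1)/2))
      (((γ-2)*(γ-1)/2) * xt ^ ((γ-2)*(γ-1)/2 - 1)) xt :=
    Real.hasDerivAt_rpow_const (Or.inl hxt0.ne')
  have h2 : HasDerivAt (fun s:ℝ => c * s ^ (γ/2)) (c * ((γ/2) * xt ^ (γ/2-1))) xt :=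
    (Real.hasDerivAt_rpow_const (Or.inl hxt0.ne')).const_mul c
  have h3 : HasDerivAt Φ
      (-(φ (c * xt ^ (γ/2)) * (c * xt ^ (γ/2)) ^ (-γ))) (c * xt ^ (γ/2)) :=
    Phi_hasDeriv hγ hφ0 hmono hdiff hconc hm
  have h4 : HasDerivAt (fun s:ℝ => Φ (c * s ^ (γ/2)))
      (-(φ (c * xt ^ (γ/2)) * (c * xt ^ (γ/2)) ^ (-γ)) * (c * ((γ/2) * xt ^ (γ/2-1)))) xt :=
    by have := h3.comp xt h2; exact this
  have h5 := (h1.mul h4).const_mul (c ^ (γ-1))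
  have h6 : HasDerivAt (fun s:ℝ => (lam * K / Real.sqrt (γ - 2)) * s ^ ((2-γ)/2))
      ((lam * K / Real.sqrt (γ - 2)) * (((2-γ)/2) * xt ^ ((2-γ)/2 - 1))) xt :=
    (Real.hasDerivAt_rpow_const (Or.inl hxt0.ne')).const_mul _
  have hT : HasDerivAt T
      (c ^ (γ-1) * (((γ-2)*(γ-1)/2) * xt ^ ((γ-2)*(γ-1)/2 - 1) * Φ (c * xt ^ (γ/2)) +
        xt ^ ((γ-2)*(γ-1)/2) *
          (-(φ (c * xt ^ (γ/2)) * (c * xt ^ (γ/2)) ^ (-γ)) * (c * ((γ/2) * xt ^ (γ/2-1))))) +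
       (lam * K / Real.sqrt (γ - 2)) * (((2-γ)/2) * xt ^ ((2-γ)/2 - 1))) xt :=
    h5.add h6
  have hDeq : deriv (fun x_t : ℝ =>
        (∫ x in Ioi x_t,
          φ (K * x / Real.sqrt (x_t ^ (2 - γ) / (γ - 2))) * x ^ (-γ)) +
          lam * K * Real.sqrt (x_t ^ (2 - γ) / (γ - 2))) xt
      = c ^ (γ-1) * (((γ-2)*(γ-1)/2) * xt ^ ((γ-2)*(γ-1)/2 - 1) * Φ (c * xt ^ (γ/2)) +
        xt ^ ((γ-2)*(γ-1)/2) *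
          (-(φ (c * xt ^ (γ/2)) * (c * xt ^ (γ/2)) ^ (-γ)) * (c * ((γ/2) * xt ^ (γ/2-1))))) +
       (lam * K / Real.sqrt (γ - 2)) * (((2-γ)/2) * xt ^ ((2-γ)/2 - 1)) := by
    rw [Filter.EventuallyEq.deriv_eq
      (Filter.eventuallyEq_of_mem (isOpen_Ioi.mem_nhds hxt0) hAll)]
    exact hT.deriv
  rw [hDeq]
  -- Part C : the inequality
  have hA : 0 ≤ φ (c * xt ^ (γ/2)) := hφ0 _ (mem_Ici.2 hm.le)
  have hΦle : Φ (c * xt ^ (γ/2)) ≤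
      φ (c * xt ^ (γ/2)) * (c * xt ^ (γ/2)) ^ (1-γ) / (γ - 2) :=
    Phi_le hγ hφ0 hmono hdiff hconc hm
  have i1 : (c * xt ^ (γ/2)) ^ (1-γ) = c ^ (1-γ) * xt ^ (γ/2*(1-γ)) := by
    rw [Real.mul_rpow hc.le (Real.rpow_nonneg hxt0.le _), ← Real.rpow_mul hxt0.le]
  have i2 : (c * xt ^ (γ/2)) ^ (-γ) = c ^ (-γ) * xt ^ (γ/2*(-γ)) := by
    rw [Real.mul_rpow hc.le (Real.rpow_nonneg hxt0.le _), ← Real.rpow_mul hxt0.le]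
  have hc1 : c ^ (γ-1) * c ^ (1-γ) = 1 := by
    rw [← Real.rpow_add hc]; norm_num
  have hc2 : c ^ (γ-1) * c ^ (-γ) * c = 1 := by
    have h : c ^ (γ-1) * c ^ (-γ) = c⁻¹ := by
      rw [← Real.rpow_add hc, show γ - 1 + -γ = -1 by ring, Real.rpow_neg_one]
    rw [h, inv_mul_cancel₀ hc.ne']
  have hx1 : xt ^ ((γ-2)*(γ-1)/2 - 1) * xt ^ (γ/2*(1-γ))
      = xt ^ ((γ-2)*(γ-1)/2 - 1 + γ/2*(1-γ)) := by
    rw [← Real.rpow_add hxt0]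
  have hx2 : xt ^ ((γ-2)*(γ-1)/2) * xt ^ (γ/2*(-γ)) * xt ^ (γ/2-1)
      = xt ^ ((γ-2)*(γ-1)/2 - 1 + γ/2*(1-γ)) := by
    rw [← Real.rpow_add hxt0, ← Real.rpow_add hxt0]
    congr 1
    ring
  set A : ℝ := φ (c * xt ^ (γ/2))
  set Z : ℝ := xt ^ ((γ-2)*(γ-1)/2 - 1 + γ/2*(1-γ)) with hZdef
  have e1 : c ^ (γ-1) * (((γ-2)*(γ-1)/2) * xt ^ ((γ-2)*(γ-1)/2 - 1)) *
      (A * (c * xt ^ (γ/2)) ^ (1-γ) / (γ - 2)) = ((γ-1)/2) * (A * Z) := by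
    rw [i1, ← mul_div_assoc, div_eq_iff (ne_of_gt hγ2)]
    linear_combination ((γ-2)*(γ-1)/2*A*(xt ^ ((γ-2)*(γ-1)/2 - 1) * xt ^ (γ/2*(1-γ)))) * hc1 +
      ((γ-2)*(γ-1)/2*A) * hx1
  have e2 : c ^ (γ-1) * (xt ^ ((γ-2)*(γ-1)/2) * (A * (c * xt ^ (γ/2)) ^ (-γ)) *
      (c * ((γ/2) * xt ^ (γ/2-1)))) = (γ/2) * (A * Z) := by
    rw [i2]
    linear_combination ((γ/2)*A*(xt ^ ((γ-2)*(γ-1)/2) * xt ^ (γ/2*(-γ)) * xt ^ (γ/2-1))) * hc2 +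
      ((γ/2)*A) * hx2
  have hb1 : c ^ (γ-1) * (((γ-2)*(γ-1)/2) * xt ^ ((γ-2)*(γ-1)/2 - 1)) * Φ (c * xt ^ (γ/2))
      ≤ ((γ-1)/2) * (A * Z) := by
    calc c ^ (γ-1) * (((γ-2)*(γ-1)/2) * xt ^ ((γ-2)*(γ-1)/2 - 1)) * Φ (c * xt ^ (γ/2))
        ≤ c ^ (γ-1) * (((γ-2)*(γ-1)/2) * xt ^ ((γ-2)*(γ-1)/2 - 1)) *
          (A * (c * xt ^ (γ/2)) ^ (1-γ) / (γ - 2)) := by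
          apply mul_le_mul_of_nonneg_left hΦle
          have hy1 : 0 < xt ^ ((γ-2)*(γ-1)/2 - 1) := Real.rpow_pos_of_pos hxt0 _
          have hy2 : 0 < c ^ (γ-1) := Real.rpow_pos_of_pos hc _
          have hy3 : 0 < (γ-2)*(γ-1)/2 := by nlinarith
          positivity
      _ = ((γ-1)/2) * (A * Z) := e1
  have ht3 : (lam * K / Real.sqrt (γ - 2)) * (((2-γ)/2) * xt ^ ((2-γ)/2 - 1)) ≤ 0 := by
    have hp1 : 0 < lam * K / Real.sqrt (γ - 2) := by positivity
    have hp2 : ((2-γ)/2) * xt ^ ((2-γ)/2 - 1) < 0 :=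
      mul_neg_of_neg_of_pos (by linarith) (Real.rpow_pos_of_pos hxt0 _)
    exact (mul_neg_of_pos_of_neg hp1 hp2).le
  have hZ0 : 0 ≤ A * Z := mul_nonneg hA (Real.rpow_pos_of_pos hxt0 _).le
  nlinarith [hb1, ht3, hZ0, e2]
end

section
/- Suppose γ, β > 2, 0 < θ < 1, φ(x) = x^θ, and constants X̄, Ȳ, λ, x₀ > 0. Define for y ≥ y₀: g(y) = (1/2)·((γ-2)/(γ-1)·φ'(√(Ȳ·J(y))·x₀) + λ)·X̄√Ȳ/√(J(y)) and h(y) = (1/2)·(∫_{x₀}^∞ φ'(x·√(Ȳ·J(y)))·x^{1-γ}dx + λX̄)·√Ȳ/√(J(y)), with J(y) = y^{2-β}/(β-2). Then h(y) > g(y) for every y ≥ y₀. -/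
open MeasureTheory Set

theorem stmt_12 (γ β θ lam x₀ y₀ Xbar Ybar : ℝ)
    (hγ : 2 < γ) (hβ : 2 < β) (hθ0 : 0 < θ) (hθ1 : θ < 1)
    (hlam : 0 < lam) (hx₀ : 0 < x₀) (hy₀ : 0 < y₀) (hY : 0 < Ybar)
    (hX : Xbar = x₀ ^ (2 - γ) / (γ - 2)) :
    ∀ y : ℝ, y₀ ≤ y →
      (1 / 2) * ((γ - 2) / (γ - 1) *
            (θ * (Real.sqrt (Ybar * (y ^ (2 - β) / (β - 2))) * x₀) ^ (θ - 1)) + lam) *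
          Xbar * Real.sqrt Ybar / Real.sqrt (y ^ (2 - β) / (β - 2)) <
      (1 / 2) * ((∫ x in Ioi x₀,
            θ * (x * Real.sqrt (Ybar * (y ^ (2 - β) / (β - 2)))) ^ (θ - 1) *
              x ^ (1 - γ)) + lam * Xbar) *
          Real.sqrt Ybar / Real.sqrt (y ^ (2 - β) / (β - 2)) := by
  intro y hy
  have hy' : 0 < y := lt_of_lt_of_le hy₀ hy
  set J : ℝ := y ^ (2 - β) / (β - 2) with hJ
  have hJpos : 0 < J := div_pos (Real.rpow_pos_of_pos hy' _) (by linarith)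
  set Z : ℝ := Real.sqrt (Ybar * J) with hZ
  have hZpos : 0 < Z := Real.sqrt_pos.mpr (mul_pos hY hJpos)
  have hXpos : 0 < Xbar := by
    rw [hX]; exact div_pos (Real.rpow_pos_of_pos hx₀ _) (by linarith)
  -- compute the integral
  have hint : (∫ x in Ioi x₀,
      θ * (x * Z) ^ (θ - 1) * x ^ (1 - γ)) =
      θ * Z ^ (θ - 1) * (x₀ ^ (θ - γ + 1) / (γ - θ - 1)) := by
    have hcong : ∀ x ∈ Ioi x₀,
        θ * (x * Z) ^ (θ - 1) * x ^ (1 - γ) = θ * Z ^ (θ - 1) * x ^ (θ - γ) := by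
      intro x hx
      have hx0 : 0 < x := lt_trans hx₀ hx
      rw [Real.mul_rpow hx0.le hZpos.le]
      rw [show θ - γ = (θ - 1) + (1 - γ) by ring, Real.rpow_add hx0]
      ring
    rw [setIntegral_congr_fun (by measurability) hcong,
      MeasureTheory.integral_const_mul,
      integral_Ioi_rpow_of_lt (by linarith) hx₀]
    rw [show θ - γ + 1 = -(γ - θ - 1) by ring]
    have : γ - θ - 1 ≠ 0 := by linarith
    have h2 : 1 - (γ - θ) ≠ 0 := by intro h; exact this (by linarith)
    field_simp
  rw [hint]
  -- reduce to core inequality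
  have hsJ : 0 < Real.sqrt J := Real.sqrt_pos.mpr hJpos
  have hsY : 0 < Real.sqrt Ybar := Real.sqrt_pos.mpr hY
  rw [div_lt_div_iff₀ hsJ hsJ]
  have key : (γ - 2) / (γ - 1) * (θ * (Z * x₀) ^ (θ - 1)) * Xbar <
      θ * Z ^ (θ - 1) * (x₀ ^ (θ - γ + 1) / (γ - θ - 1)) := by
    have h1 : (Z * x₀) ^ (θ - 1) = Z ^ (θ - 1) * x₀ ^ (θ - 1) :=
      Real.mul_rpow hZpos.le hx₀.le
    have h2 : x₀ ^ (θ - 1) * x₀ ^ (2 - γ) = x₀ ^ (θ - γ + 1) := by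
      rw [← Real.rpow_add hx₀]; ring_nf
    have hlhs : (γ - 2) / (γ - 1) * (θ * (Z * x₀) ^ (θ - 1)) * Xbar =
        θ * Z ^ (θ - 1) * (x₀ ^ (θ - γ + 1) / (γ - 1)) := by
      rw [h1, hX, ← h2]
      have hg1 : (γ:ℝ) - 1 ≠ 0 := by linarith
      have hg2 : (γ:ℝ) - 2 ≠ 0 := by linarith
      field_simp
    rw [hlhs]
    have hpos : 0 < θ * Z ^ (θ - 1) * x₀ ^ (θ - γ + 1) :=
      mul_pos (mul_pos hθ0 (Real.rpow_pos_of_pos hZpos _)) (Real.rpow_pos_of_pos hx₀ _)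
    have hd : x₀ ^ (θ - γ + 1) / (γ - 1) < x₀ ^ (θ - γ + 1) / (γ - θ - 1) :=
      div_lt_div_of_pos_left (Real.rpow_pos_of_pos hx₀ _) (by linarith) (by linarith)
    exact mul_lt_mul_of_pos_left hd (mul_pos hθ0 (Real.rpow_pos_of_pos hZpos _))
  have hZx : Z ^ (θ - 1) = Z ^ (θ - 1) := rfl
  nlinarith [mul_pos hXpos hlam, mul_pos hsY hsJ,
    mul_lt_mul_of_pos_right key (mul_pos hsY hsJ)]
end

section
/- Let γ > 2 and 0 < θ < 1 with φ(x) = x^θ. Then (1/2)·((γ-2)/(γ-1)·φ'(Ȳx₀) + λ)·X̄ < (1/2)·(∫_{x₀}^∞ φ'(xȲ)·x^{1-γ}dx + λX̄), where X̄ = x₀^{2-γ}/(γ-2) and Ȳ, λ, x₀ > 0. In other words, the threshold on CP cost a below which no CPs are cut off is strictly smaller for revenue maximization than for social-welfare maximization. -/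
open MeasureTheory Set

theorem stmt_14 (γ θ lam x₀ Ybar Xbar : ℝ)
    (hγ : 2 < γ) (hθ0 : 0 < θ) (hθ1 : θ < 1)
    (hlam : 0 < lam) (hx₀ : 0 < x₀) (hY : 0 < Ybar)
    (hX : Xbar = x₀ ^ (2 - γ) / (γ - 2)) :
    (1 / 2) * ((γ - 2) / (γ - 1) * (θ * (Ybar * x₀) ^ (θ - 1)) + lam) * Xbar <
    (1 / 2) * ((∫ x in Ioi x₀, θ * (x * Ybar) ^ (θ - 1) * x ^ (1 - γ)) +
      lam * Xbar) := by
  have hlt : θ - 1 + (1 - γ) < -1 := by linarith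
  have hd1 : γ - 1 ≠ 0 := by linarith
  have hd2 : γ - 2 ≠ 0 := by linarith
  have hd3 : γ - θ - 1 ≠ 0 := by linarith
  have hint : (∫ x in Ioi x₀, θ * (x * Ybar) ^ (θ - 1) * x ^ (1 - γ))
      = θ * Ybar ^ (θ - 1) * (x₀ ^ (θ - 1 + (1 - γ) + 1) / (γ - θ - 1)) := by
    rw [setIntegral_congr_fun measurableSet_Ioi
      (g := fun x => (θ * Ybar ^ (θ - 1)) * x ^ (θ - 1 + (1 - γ)))]
    · rw [MeasureTheory.integral_const_mul, integral_Ioi_rpow_of_lt hlt hx₀]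
      have : -(x₀ ^ (θ - 1 + (1 - γ) + 1)) / (θ - 1 + (1 - γ) + 1)
          = x₀ ^ (θ - 1 + (1 - γ) + 1) / (γ - θ - 1) := by
        rw [neg_div, ← div_neg]; ring_nf
      rw [this]
    · intro x hx
      have hx0 : (0 : ℝ) < x := lt_trans hx₀ hx
      simp only [Real.mul_rpow hx0.le hY.le, Real.rpow_add hx0]
      ring
  rw [hint, hX]
  have hx2 : (0 : ℝ) < x₀ ^ (2 - γ) := Real.rpow_pos_of_pos hx₀ _
  have hP : (0 : ℝ) < θ * Ybar ^ (θ - 1) * x₀ ^ (θ - 1 + (1 - γ) + 1) := by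
    positivity
  have key : (γ - 2) / (γ - 1) * (θ * (Ybar * x₀) ^ (θ - 1)) * (x₀ ^ (2 - γ) / (γ - 2))
      < θ * Ybar ^ (θ - 1) * (x₀ ^ (θ - 1 + (1 - γ) + 1) / (γ - θ - 1)) := by
    have hsplit : (Ybar * x₀) ^ (θ - 1) = Ybar ^ (θ - 1) * x₀ ^ (θ - 1) :=
      Real.mul_rpow hY.le hx₀.le
    have hmul : x₀ ^ (θ - 1) * x₀ ^ (2 - γ) = x₀ ^ (θ - 1 + (1 - γ) + 1) := by
      rw [← Real.rpow_add hx₀]; ring_nf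
    set P := θ * Ybar ^ (θ - 1) * x₀ ^ (θ - 1 + (1 - γ) + 1) with hPdef
    have hLHS : (γ - 2) / (γ - 1) * (θ * (Ybar * x₀) ^ (θ - 1)) * (x₀ ^ (2 - γ) / (γ - 2))
        = P / (γ - 1) := by
      rw [hsplit, hPdef, ← hmul]
      field_simp
    rw [hLHS, mul_div_assoc']
    exact div_lt_div_of_pos_left hP (by linarith) (by linarith)
  linarith
end

section
/- Let γ > 2, φ nonnegative increasing differentiable concave on [0,∞) with x·φ'(x) ≤ φ(x), and constants A, B ≥ 0, λ > 0. Define η(x_t) = A·x_t/√(I(x_t)) with I(x_t) = x_t^{2-γ}/(γ-2), and R(x_t) = φ(η(x_t))·x_t^{1-γ}/(γ-1) + λ·B·√(I(x_t)). Then ∂η/∂x_t = (γ/2)·η(x_t)/x_t and R'(x_t) ≤ (γ/(2(γ-1)) − 1)·φ(η(x_t))·x_t^{-γ} ≤ 0. -/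
open Set

theorem stmt_18 (γ lam A B x₀ : ℝ) (φ : ℝ → ℝ)
    (hγ : 2 < γ) (hlam : 0 < lam) (hA : 0 ≤ A) (hB : 0 ≤ B) (hx₀ : 0 < x₀)
    (hφ0 : ∀ x ∈ Ici (0 : ℝ), 0 ≤ φ x)
    (hmono : MonotoneOn φ (Ici 0))
    (hdiff : Differentiable ℝ φ)
    (hconc : ConcaveOn ℝ (Ici 0) φ)
    (hsub : ∀ x : ℝ, 0 ≤ x → x * deriv φ x ≤ φ x) :
    ∀ xt : ℝ, x₀ ≤ xt →
      HasDerivAt (fun x : ℝ => A * x / Real.sqrt (x ^ (2 - γ) / (γ - 2)))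
        ((γ / 2) * (A * xt / Real.sqrt (xt ^ (2 - γ) / (γ - 2))) / xt) xt ∧
      deriv (fun x : ℝ =>
          φ (A * x / Real.sqrt (x ^ (2 - γ) / (γ - 2))) * x ^ (1 - γ) / (γ - 1) +
            lam * B * Real.sqrt (x ^ (2 - γ) / (γ - 2))) xt ≤
        (γ / (2 * (γ - 1)) - 1) *
          φ (A * xt / Real.sqrt (xt ^ (2 - γ) / (γ - 2))) * xt ^ (-γ) ∧
      (γ / (2 * (γ - 1)) - 1) *
          φ (A * xt / Real.sqrt (xt ^ (2 - γ) / (γ - 2))) * xt ^ (-γ) ≤ 0 := by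
  intro xt hxt
  have hx : (0:ℝ) < xt := lt_of_lt_of_le hx₀ hxt
  have hg2 : (0:ℝ) < γ - 2 := by linarith
  have hg1 : (0:ℝ) < γ - 1 := by linarith
  have hc : (0:ℝ) < Real.sqrt (γ - 2) := Real.sqrt_pos.mpr hg2
  set c := Real.sqrt (γ - 2) with hcdef
  -- S(x) = √(x^(2-γ)/(γ-2)) = x^((2-γ)/2)/c for x > 0
  have hSeq : ∀ x : ℝ, 0 < x →
      Real.sqrt (x ^ (2 - γ) / (γ - 2)) = x ^ ((2 - γ) / 2) / c := by
    intro x hx'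
    rw [Real.sqrt_div (Real.rpow_nonneg hx'.le _), hcdef]
    congr 1
    rw [Real.sqrt_eq_rpow, ← Real.rpow_mul hx'.le]
    ring_nf
  -- η(x) = A*c*x^(γ/2)
  have hηeq : ∀ x : ℝ, 0 < x →
      A * x / Real.sqrt (x ^ (2 - γ) / (γ - 2)) = A * c * x ^ (γ / 2) := by
    intro x hx'
    have hsplit : x = x ^ (γ / 2) * x ^ ((2 - γ) / 2) := by
      rw [← Real.rpow_add hx']
      have h2 : γ / 2 + (2 - γ) / 2 = 1 := by ring
      rw [h2, Real.rpow_one]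
    have h1 : x ^ ((2 - γ) / 2) ≠ 0 := (Real.rpow_pos_of_pos hx' _).ne'
    rw [hSeq x hx']
    rw [div_div_eq_mul_div, div_eq_iff h1]
    nth_rewrite 1 [hsplit]
    ring
  -- derivative of η
  have hxne : xt ≠ 0 := hx.ne'
  have hrp : HasDerivAt (fun x : ℝ => A * c * x ^ (γ / 2))
      (A * c * ((γ / 2) * xt ^ (γ / 2 - 1))) xt :=
    (Real.hasDerivAt_rpow_const (Or.inl hxne)).const_mul (A * c)
  have hmem : Ioi (0:ℝ) ∈ nhds xt := Ioi_mem_nhds hx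
  have heevent : (fun x : ℝ => A * x / Real.sqrt (x ^ (2 - γ) / (γ - 2)))
      =ᶠ[nhds xt] fun x : ℝ => A * c * x ^ (γ / 2) :=
    Filter.eventuallyEq_of_mem hmem fun x hx' => hηeq x hx'
  have hdval : A * c * ((γ / 2) * xt ^ (γ / 2 - 1))
      = (γ / 2) * (A * xt / Real.sqrt (xt ^ (2 - γ) / (γ - 2))) / xt := by
    rw [hηeq xt hx]
    have : xt ^ (γ / 2 - 1) = xt ^ (γ / 2) / xt := by
      rw [Real.rpow_sub hx, Real.rpow_one]
    rw [this]
    field_simp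
  have hηderiv : HasDerivAt (fun x : ℝ => A * x / Real.sqrt (x ^ (2 - γ) / (γ - 2)))
      ((γ / 2) * (A * xt / Real.sqrt (xt ^ (2 - γ) / (γ - 2))) / xt) xt := by
    rw [← hdval]
    exact hrp.congr_of_eventuallyEq heevent
  refine ⟨hηderiv, ?_, ?_⟩
  · -- derivative bound
    set ηt := A * xt / Real.sqrt (xt ^ (2 - γ) / (γ - 2)) with hηtdef
    set dη := γ / 2 * ηt / xt with hdηdef
    have hηt0 : 0 ≤ ηt := by
      rw [hηtdef, hηeq xt hx]
      positivity
    have hφd : HasDerivAt φ (deriv φ ηt) ηt := (hdiff ηt).hasDerivAt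
    have hcomp : HasDerivAt (fun x : ℝ => φ (A * x / Real.sqrt (x ^ (2 - γ) / (γ - 2))))
        (deriv φ ηt * dη) xt := hφd.comp xt hηderiv
    have hpow : HasDerivAt (fun x : ℝ => x ^ (1 - γ)) ((1 - γ) * xt ^ (1 - γ - 1)) xt :=
      Real.hasDerivAt_rpow_const (Or.inl hxne)
    have hSd0 : HasDerivAt (fun x : ℝ => x ^ ((2 - γ) / 2) / c)
        ((2 - γ) / 2 * xt ^ ((2 - γ) / 2 - 1) / c) xt :=
      (Real.hasDerivAt_rpow_const (Or.inl hxne)).div_const c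
    have hSderiv : HasDerivAt (fun x : ℝ => Real.sqrt (x ^ (2 - γ) / (γ - 2)))
        ((2 - γ) / 2 * xt ^ ((2 - γ) / 2 - 1) / c) xt :=
      hSd0.congr_of_eventuallyEq (Filter.eventuallyEq_of_mem hmem fun x hx' => hSeq x hx')
    have hR : HasDerivAt (fun x : ℝ =>
        φ (A * x / Real.sqrt (x ^ (2 - γ) / (γ - 2))) * x ^ (1 - γ) / (γ - 1) +
          lam * B * Real.sqrt (x ^ (2 - γ) / (γ - 2)))
        ((deriv φ ηt * dη * xt ^ (1 - γ) +
            φ ηt * ((1 - γ) * xt ^ (1 - γ - 1))) / (γ - 1) +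
          lam * B * ((2 - γ) / 2 * xt ^ ((2 - γ) / 2 - 1) / c)) xt :=
      ((hcomp.mul hpow).div_const (γ - 1)).add (hSderiv.const_mul (lam * B))
    rw [hR.deriv]
    -- abbreviations
    set Q := deriv φ ηt with hQdef
    set P := φ ηt with hPdef
    set K := xt ^ (-γ) with hKdef
    set E := xt ^ ((2 - γ) / 2 - 1) with hEdef
    have hK : 0 < K := Real.rpow_pos_of_pos hx _
    have hE : 0 < E := Real.rpow_pos_of_pos hx _
    have hP : 0 ≤ P := hφ0 ηt hηt0
    have hq : ηt * Q ≤ P := hsub ηt hηt0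
    have h1γ : xt ^ (1 - γ) = xt * K := by
      have h : xt * xt ^ (-γ) = xt ^ (1 + -γ) := by
        rw [Real.rpow_add hx, Real.rpow_one]
      rw [hKdef, h]
      norm_num [sub_eq_add_neg]
    have h1γ1 : xt ^ (1 - γ - 1) = K := by
      rw [hKdef]
      congr 1
      ring
    have hT3 : lam * B * ((2 - γ) / 2 * E / c) ≤ 0 := by
      have h1 : (2 - γ) / 2 * E ≤ 0 := by nlinarith
      have h2 : (2 - γ) / 2 * E / c ≤ 0 := div_nonpos_of_nonpos_of_nonneg h1 hc.le
      exact mul_nonpos_of_nonneg_of_nonpos (mul_nonneg hlam.le hB) h2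
    rw [h1γ, h1γ1]
    have hterm1 : Q * dη * (xt * K) = γ / 2 * (ηt * Q) * K := by
      rw [hdηdef]
      field_simp
    have hterm1le : γ / 2 * (ηt * Q) * K ≤ γ / 2 * P * K := by
      have h1 : ηt * Q * K ≤ P * K := mul_le_mul_of_nonneg_right hq hK.le
      nlinarith
    have hmain : (γ / 2 * P * K + P * ((1 - γ) * K)) / (γ - 1) =
        (γ / (2 * (γ - 1)) - 1) * P * K := by
      field_simp
      ring
    calc (Q * dη * (xt * K) + P * ((1 - γ) * K)) / (γ - 1) +
          lam * B * ((2 - γ) / 2 * E / c)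
        ≤ (Q * dη * (xt * K) + P * ((1 - γ) * K)) / (γ - 1) := by linarith
      _ = (γ / 2 * (ηt * Q) * K + P * ((1 - γ) * K)) / (γ - 1) := by rw [hterm1]
      _ ≤ (γ / 2 * P * K + P * ((1 - γ) * K)) / (γ - 1) :=
          (div_le_div_iff_of_pos_right hg1).mpr (by linarith)
      _ = (γ / (2 * (γ - 1)) - 1) * P * K := hmain
  · -- nonpositivity
    have hco : γ / (2 * (γ - 1)) - 1 ≤ 0 := by
      rw [sub_nonpos, div_le_one (by linarith)]
      linarith
    have hP : 0 ≤ φ (A * xt / Real.sqrt (xt ^ (2 - γ) / (γ - 2))) := by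
      apply hφ0
      rw [mem_Ici, hηeq xt hx]
      positivity
    have hK : (0:ℝ) ≤ xt ^ (-γ) := (Real.rpow_pos_of_pos hx _).le
    exact mul_nonpos_iff.mpr (Or.inr ⟨mul_nonpos_iff.mpr (Or.inr ⟨hco, hP⟩), hK⟩)
end
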